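/- Let t̂ > 0 and x_1, …, x_N ≥ 0 be real numbers with Σ_{i=1}^N x_i = M > 0, and let t_1, …, t_N ∈ ℝ \ {0}. Then Σ_{i=1}^N x_i·t_i ≤ 0 if and only if there exists ε > 0 such that h(f) := Σ_{i=1}^N x_i·log(1 + f·t_i/t̂) < 0 for all f ∈ (0, ε). -/

import Mathlib

open Finset

lemma aux_log_lb (u : ℝ) (h : -1 < u) : u / (1 + u) ≤ Real.log (1 + u) := by
  have hp : (0:ℝ) < 1 + u := by linarith
  have h1 := Real.log_le_sub_one_of_pos (inv_pos.mpr hp)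
  rw [Real.log_inv] at h1
  have h2 : 1 - (1+u)⁻¹ ≤ Real.log (1+u) := by linarith
  have h3 : u / (1+u) = 1 - (1+u)⁻¹ := by field_simp; ring
  linarith

lemma aux_log_lb2 (u : ℝ) (h : |u| ≤ 1/2) : u - 2*u^2 ≤ Real.log (1 + u) := by
  have h1 : -(1/2 : ℝ) ≤ u := neg_le_of_abs_le h
  have h2 : u ≤ 1/2 := le_of_abs_le h
  have hlb := aux_log_lb u (by linarith)
  have hp : (0:ℝ) < 1 + u := by linarith
  have heq : u/(1+u) - (u - 2*u^2) = u^2*(1+2*u)/(1+u) := by field_simp; ring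
  have hnn : 0 ≤ u^2*(1+2*u)/(1+u) := by
    apply div_nonneg _ (le_of_lt hp)
    nlinarith [sq_nonneg u]
  linarith

theorem stmt_7 (N : ℕ) (that : ℝ) (hthat : 0 < that)
    (x : Fin N → ℝ) (hx : ∀ i, 0 ≤ x i)
    (M : ℝ) (hsum : ∑ i, x i = M) (hM : 0 < M)
    (t : Fin N → ℝ) (ht : ∀ i, t i ≠ 0) :
    (∑ i, x i * t i ≤ 0) ↔
      ∃ ε > 0, ∀ f : ℝ, 0 < f → f < ε →
        ∑ i, x i * Real.log (1 + f * t i / that) < 0 := by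
  set B : ℝ := 1 + ∑ i, |t i| with hBdef
  have hBpos : 0 < B := by positivity
  have hBi : ∀ i, |t i| ≤ B := by
    intro i
    have : |t i| ≤ ∑ j, |t j| :=
      Finset.single_le_sum (f := fun j => |t j|) (fun j _ => abs_nonneg _) (mem_univ i)
    linarith
  obtain ⟨i₀, hxi₀⟩ : ∃ i, 0 < x i := by
    by_contra hc
    push_neg at hc
    have : ∑ i, x i = 0 := Finset.sum_eq_zero fun i _ => le_antisymm (hc i) (hx i)
    rw [this] at hsum; linarith
  constructor
  · intro hS
    refine ⟨that / B, by positivity, fun f hf hfe => ?_⟩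
    have hui : ∀ i, |f * t i / that| < 1 := by
      intro i
      rw [abs_div, abs_of_pos hthat, div_lt_one hthat, abs_mul, abs_of_pos hf]
      calc f * |t i| ≤ f * B := by nlinarith [hBi i, abs_nonneg (t i)]
        _ < that := by
          have := (lt_div_iff₀ hBpos).mp hfe
          linarith
    have key : ∑ i, x i * Real.log (1 + f * t i / that) < ∑ i, x i * (f * t i / that) := by
      apply Finset.sum_lt_sum
      · intro j _
        apply mul_le_mul_of_nonneg_left _ (hx j)
        have hp : (0:ℝ) < 1 + f * t j / that := by
          have := abs_lt.mp (hui j); linarith [this.1]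
        have := Real.log_le_sub_one_of_pos hp
        linarith
      · refine ⟨i₀, mem_univ i₀, ?_⟩
        apply mul_lt_mul_of_pos_left _ hxi₀
        have hp : (0:ℝ) < 1 + f * t i₀ / that := by
          have := abs_lt.mp (hui i₀); linarith [this.1]
        have hne : (1 : ℝ) + f * t i₀ / that ≠ 1 := by
          intro hc
          have : f * t i₀ / that = 0 := by linarith
          have : f * t i₀ = 0 := by field_simp at this; linarith
          rcases mul_eq_zero.mp this with h | h
          · exact absurd h (ne_of_gt hf)
          · exact ht i₀ h
        have := Real.log_lt_sub_one_of_pos hp hne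
        linarith
    have heq : ∑ i, x i * (f * t i / that) = (f / that) * ∑ i, x i * t i := by
      rw [Finset.mul_sum]; apply Finset.sum_congr rfl; intro j _; field_simp
    have : (f / that) * ∑ i, x i * t i ≤ 0 :=
      mul_nonpos_of_nonneg_of_nonpos (le_of_lt (div_pos hf hthat)) hS
    linarith
  · rintro ⟨ε, hε, hall⟩
    by_contra hS
    push_neg at hS
    set S := ∑ i, x i * t i with hSdef
    set Q := ∑ i, x i * (t i)^2 with hQdef
    have hQ0 : 0 ≤ Q := Finset.sum_nonneg fun i _ => mul_nonneg (hx i) (sq_nonneg _)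
    set f : ℝ := min (min (ε/2) (that/(2*B))) (S*that/(2*Q+1)) with hfdef
    have hf0 : 0 < f := by
      apply lt_min (lt_min (by linarith) (by positivity))
      positivity
    have hfε : f < ε := lt_of_le_of_lt (le_trans (min_le_left _ _) (min_le_left _ _)) (by linarith)
    have hfB : f ≤ that/(2*B) := le_trans (min_le_left _ _) (min_le_right _ _)
    have hfQ : f ≤ S*that/(2*Q+1) := min_le_right _ _
    have habs : ∀ i, |f * t i / that| ≤ 1/2 := by
      intro i
      rw [abs_div, abs_of_pos hthat, div_le_iff₀ hthat, abs_mul, abs_of_pos hf0]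
      have h1 : f * |t i| ≤ (that/(2*B)) * B :=
        mul_le_mul hfB (hBi i) (abs_nonneg _) (by positivity)
      have : (that/(2*B)) * B = that/2 := by field_simp
      linarith
    have hlb : ∀ i, x i * (f * t i / that - 2*(f * t i / that)^2)
        ≤ x i * Real.log (1 + f * t i / that) := fun i =>
      mul_le_mul_of_nonneg_left (aux_log_lb2 _ (habs i)) (hx i)
    have hsumlb : (f/that) * S - 2*(f/that)^2 * Q
        ≤ ∑ i, x i * Real.log (1 + f * t i / that) := by
      have := Finset.sum_le_sum fun i (_ : i ∈ univ) => hlb i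
      have heq : ∑ i, x i * (f * t i / that - 2*(f * t i / that)^2)
          = (f/that) * S - 2*(f/that)^2 * Q := by
        rw [hSdef, hQdef, Finset.mul_sum, Finset.mul_sum, ← Finset.sum_sub_distrib]
        apply Finset.sum_congr rfl; intro j _; field_simp
      linarith
    have hpos : 0 ≤ (f/that) * S - 2*(f/that)^2 * Q := by
      have h1 : 2*(f/that)*Q ≤ S := by
        have h2 : f*(2*Q+1) ≤ S*that := by
          have := hfQ
          rw [le_div_iff₀ (by positivity : (0:ℝ) < 2*Q+1)] at this
          linarith
        have h3 : 2*(f/that)*Q = (2*f*Q)/that := by ring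
        rw [h3, div_le_iff₀ hthat]
        linarith
      have hfot : 0 < f/that := div_pos hf0 hthat
      have : (f/that) * (S - 2*(f/that)*Q) = (f/that)*S - 2*(f/that)^2*Q := by ring
      nlinarith
    have := hall f hf0 hfε
    linarith
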